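/- Let τ ∈ S^ℕ be acceptable of period N with τ₀ = *, and let k be an integer with N/2 < k < N such that τ_{k+i} = τᵢ for all 1 ≤ i ≤ N−k−1. Define ν₁⋯ν_N ∈ {1,2}^N by νᵢ = τᵢ for 1 ≤ i ≤ N−1 and ν_N = τ_{N−k}, and let e = (ν₁⋯ν_{k−1}ν_k′)^∞ ν₁⋯ν_N and ẽ = (ν₁⋯ν_{N−k−1}ν_{N−k}′ν_{N−k+1}⋯ν_k)^∞ ν₁⋯ν_{N−k−1}ν_{N−k}′ν_{N−k+1}⋯ν_{N−1}ν_N′. Then e and ẽ lie on distinct arc-components of D̂_τ: for all x̂, ŷ ∈ D̂_τ with e(x̂) = e and e(ŷ) = ẽ, no arc in D̂_τ contains both x̂ and ŷ. -/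

import Mathlib

open Topology Filter
open scoped NNReal

/-- The symbol set `S = {*, 1, 2}`. -/
inductive S : Type
  | star : S
  | one : S
  | two : S
  deriving DecidableEq

/-- The topology on `S` generated by the basis `{{1}, {2}, {*,1,2}}`. -/
instance : TopologicalSpace S :=
  TopologicalSpace.generateFrom {{S.one}, {S.two}}

/-- `a ≈ b` iff `a = b` or one of them is `*`. -/
def S.approx (a b : S) : Prop := a = b ∨ a = S.star ∨ b = S.star

/-- The `n`-th iterate `σⁿ` of the shift map on `S^ℕ`. -/
def shiftN (n : ℕ) (x : ℕ → S) : ℕ → S := fun i => x (n + i)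

/-- `τ` is acceptable: for all `n ≥ 1`, `σⁿ(τ) ≈ τ` implies `σⁿ(τ) = τ`. -/
def Acceptable (τ : ℕ → S) : Prop :=
  ∀ n : ℕ, 1 ≤ n → (∀ i, S.approx (τ (n + i)) (τ i)) → shiftN n τ = τ

/-- `τ` has period `N`: `σ^N(τ) = τ` and `σʲ(τ) ≠ τ` for `1 ≤ j < N`. -/
def HasPeriod (τ : ℕ → S) (N : ℕ) : Prop :=
  shiftN N τ = τ ∧ ∀ j : ℕ, 1 ≤ j → j < N → shiftN j τ ≠ τ

/-- `x` is `τ`-admissible: `xₙ = *` implies `σⁿ(x) = τ`, and `σⁿ(x) ≈ τ` implies `σⁿ(x) = τ`. -/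
def Admissible (τ x : ℕ → S) : Prop :=
  (∀ n : ℕ, x n = S.star → shiftN n x = τ) ∧
  (∀ n : ℕ, (∀ i, S.approx (x (n + i)) (τ i)) → shiftN n x = τ)

/-- `D_τ`, the set of `τ`-admissible sequences. -/
def Dtau (τ : ℕ → S) : Set (ℕ → S) := {x | Admissible τ x}

/-- `πₙ(x̂) = (x̂_{n+i})_{i ≥ 0}` for `x̂ ∈ S^ℤ`. -/
def proj (n : ℤ) (x : ℤ → S) : ℕ → S := fun i => x (n + i)

/-- `D̂_τ = {x̂ ∈ S^ℤ : πₙ(x̂) ∈ D_τ for all n}`. -/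
def Dhat (τ : ℕ → S) : Set (ℤ → S) := {x | ∀ n : ℤ, proj n x ∈ Dtau τ}

/-- The backwards itinerary of `x̂`, as a sequence indexed by `ℕ`:
`bitin x̂ m` is the entry of `x̂` at index `-(m+1)`. -/
def bitin (x : ℤ → S) : ℕ → S := fun m => x (-((m : ℤ) + 1))

/-- A left-infinite sequence `e` occurs in `D̂_τ`. -/
def OccursIn (τ : ℕ → S) (e : ℕ → S) : Prop := ∃ x ∈ Dhat τ, bitin x = e

/-- `T_N(e) = {ŷ ∈ D̂_τ : ŷᵢ ≈ eᵢ for all i ≤ N}`, for `N ≤ -1`. -/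
def TsetN (τ : ℕ → S) (N : ℤ) (e : ℕ → S) : Set (ℤ → S) :=
  {y | y ∈ Dhat τ ∧ ∀ m : ℕ, -((m : ℤ) + 1) ≤ N → S.approx (y (-((m : ℤ) + 1))) (e m)}

/-- `T(e) = T₋₁(e)`. -/
def Tset (τ : ℕ → S) (e : ℕ → S) : Set (ℤ → S) := TsetN τ (-1) e

/-- `A` is an arc with endpoints `a` and `b`: a homeomorphic image of `[0,1]`. -/
def IsArc {X : Type*} [TopologicalSpace X] (A : Set X) (a b : X) : Prop :=
  ∃ f : unitInterval → X, Topology.IsEmbedding f ∧ Set.range f = A ∧ f 0 = a ∧ f 1 = b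

/-- `A` is an arc (a homeomorphic image of `[0,1]`). -/
def IsArcSet {X : Type*} [TopologicalSpace X] (A : Set X) : Prop := ∃ a b, IsArc A a b

/-- The set of `k ≥ 1` with `k ≡ i (mod N)` such that `e₋ₖ⋯e₋₁ ≈ τ₀⋯τₖ₋₁`;
`βⁱ(e)` is its maximum (defined iff this set is nonempty). -/
def BetaSet (τ : ℕ → S) (N : ℕ) (e : ℕ → S) (i : ℕ) : Set ℕ :=
  {k | 1 ≤ k ∧ k % N = i ∧ ∀ m, m < k → S.approx (e m) (τ (k - 1 - m))}

/-- `βⁱ(e)` is defined. -/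
def BetaDefined (τ : ℕ → S) (N : ℕ) (e : ℕ → S) (i : ℕ) : Prop := (BetaSet τ N e i).Nonempty

/-- `φ : [0,∞) → D̂_τ` is a parameterization of the ray `Φ`:
a continuous bijection onto `Φ ⊆ D̂_τ`. -/
def IsParamOf (τ : ℕ → S) (φ : ℝ≥0 → (ℤ → S)) (Φ : Set (ℤ → S)) : Prop :=
  Continuous φ ∧ Function.Injective φ ∧ Set.range φ = Φ ∧ Φ ⊆ Dhat τ

/-- The ray `Φ` originates in `T(e)`: it has a parameterization `φ` with `e(φ(0)) = e`. -/
def OriginatesIn (τ : ℕ → S) (Φ : Set (ℤ → S)) (e : ℕ → S) : Prop :=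
  ∃ φ, IsParamOf τ φ Φ ∧ bitin (φ 0) = e

/-- `d` is a metric on `A` compatible with the subspace topology of `A`. -/
def IsCompatibleDist {X : Type*} [TopologicalSpace X] (A : Set X) (d : X → X → ℝ) : Prop :=
  (∀ x ∈ A, ∀ y ∈ A, 0 ≤ d x y) ∧
  (∀ x ∈ A, ∀ y ∈ A, (d x y = 0 ↔ x = y)) ∧
  (∀ x ∈ A, ∀ y ∈ A, d x y = d y x) ∧
  (∀ x ∈ A, ∀ y ∈ A, ∀ z ∈ A, d x z ≤ d x y + d y z) ∧
  (∀ x ∈ A, ∀ u : Set X, u ∈ nhdsWithin x A ↔ ∃ ε > 0, {y | y ∈ A ∧ d x y < ε} ⊆ u)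

/-- The rays `Φ` and `Ψ` are asymptotic: for a metric `d` compatible with the topology of
`D̂_τ`, they admit parameterizations `φ, ψ` with `d(φ(s), ψ(s)) → 0` as `s → ∞`. -/
def AsymptoticRays (τ : ℕ → S) (Φ Ψ : Set (ℤ → S)) : Prop :=
  ∃ d : (ℤ → S) → (ℤ → S) → ℝ, IsCompatibleDist (Dhat τ) d ∧
    ∃ φ ψ, IsParamOf τ φ Φ ∧ IsParamOf τ ψ Ψ ∧
      Tendsto (fun s => d (φ s) (ψ s)) atTop (nhds 0)

/-- The `n`-th folding step for a ray parameterized by `φ`, with fold times `s` and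
backwards itineraries `E n = Rⁿe`:  `s (n+1)` is the minimal time after `s n` at which the
backwards itinerary differs from `E n`, and just after `s (n+1)` the itinerary is `E (n+1)`. -/
def FoldStep (φ : ℝ≥0 → (ℤ → S)) (s : ℕ → ℝ≥0) (E : ℕ → (ℕ → S)) (n : ℕ) : Prop :=
  s n < s (n + 1) ∧
  bitin (φ (s (n + 1))) ≠ E n ∧
  (∀ u : ℝ≥0, s n < u → u < s (n + 1) → bitin (φ u) = E n) ∧
  E (n + 1) ≠ E n ∧
  ∃ ε : ℝ≥0, 0 < ε ∧ ∀ δ : ℝ≥0, 0 < δ → δ < ε → bitin (φ (s (n + 1) + δ)) = E (n + 1)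

/-- The ray parameterized by `φ` has infinite folding pattern with `Rⁿe = E n` for all `n`. -/
def FoldingFrom (φ : ℝ≥0 → (ℤ → S)) (s : ℕ → ℝ≥0) (E : ℕ → (ℕ → S)) : Prop :=
  s 0 = 0 ∧ bitin (φ 0) = E 0 ∧ ∀ n, FoldStep φ s E n

/-- The folding pattern of the ray parameterized by `φ` is defined through step `M`,
with `Rⁿe = E n` for `n ≤ M`. -/
def FoldingUpTo (φ : ℝ≥0 → (ℤ → S)) (s : ℕ → ℝ≥0) (E : ℕ → (ℕ → S)) (M : ℕ) : Prop :=
  s 0 = 0 ∧ bitin (φ 0) = E 0 ∧ ∀ n, n < M → FoldStep φ s E n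

/-- The left-infinite sequence `W^∞V` (infinitely many copies of the word `W`, followed by
the word `V`, ending at index `-1`), in the indexing of `bitin`. -/
def wrep (W V : List S) : ℕ → S := fun m =>
  if m < V.length then V.getD (V.length - 1 - m) S.star
  else W.getD (W.length - 1 - ((m - V.length) % W.length)) S.star

/-- `a ↦ a′` on `{1,2}` (fixing `*`). -/
def flipS : S → S
  | S.star => S.star
  | S.one => S.two
  | S.two => S.one

/-- The word `ν_a ν_{a+1} ⋯ ν_b`. -/
def seg (ν : ℕ → S) (a b : ℕ) : List S := (List.range (b + 1 - a)).map (fun i => ν (a + i))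

/-- `ν₁⋯ν_N` with `νᵢ = τᵢ` for `1 ≤ i ≤ N-1` and `ν_N = τ_{N-k}` (Theorem `case2`). -/
def nuCase2 (τ : ℕ → S) (N k : ℕ) : ℕ → S := fun i => if i = N then τ (N - k) else τ i

/-- `e = (ν₁⋯ν_{k-1}ν_k′)^∞ ν₁⋯ν_N`. -/
def eCase2 (τ : ℕ → S) (N k : ℕ) : ℕ → S :=
  wrep (seg (nuCase2 τ N k) 1 (k - 1) ++ [flipS (nuCase2 τ N k k)])
       (seg (nuCase2 τ N k) 1 N)

/-- `ẽ = (ν₁⋯ν_{N-k-1}ν_{N-k}′ν_{N-k+1}⋯ν_k)^∞ ν₁⋯ν_{N-k-1}ν_{N-k}′ν_{N-k+1}⋯ν_{N-1}ν_N′`. -/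
def etCase2 (τ : ℕ → S) (N k : ℕ) : ℕ → S :=
  wrep (seg (nuCase2 τ N k) 1 (N - k - 1) ++ [flipS (nuCase2 τ N k (N - k))] ++
          seg (nuCase2 τ N k) (N - k + 1) k)
       (seg (nuCase2 τ N k) 1 (N - k - 1) ++ [flipS (nuCase2 τ N k (N - k))] ++
          seg (nuCase2 τ N k) (N - k + 1) (N - 1) ++ [flipS (nuCase2 τ N k N)])

/-! ### Auxiliary lemmas -/

section Aux

open Set

lemma flipS_ne {a : S} (h : a ≠ S.star) : flipS a ≠ a := by cases a <;> simp_all [flipS]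

lemma flipS_ne_star {a : S} (h : a ≠ S.star) : flipS a ≠ S.star := by
  cases a <;> simp_all [flipS]

lemma isOpen_S_one : IsOpen ({S.one} : Set S) :=
  TopologicalSpace.isOpen_generateFrom_of_mem (by simp)

lemma isOpen_S_two : IsOpen ({S.two} : Set S) :=
  TopologicalSpace.isOpen_generateFrom_of_mem (by simp)

lemma isOpen_S_val {a : S} (h : a ≠ S.star) : IsOpen ({s : S | s = a} : Set S) := by
  cases a with
  | star => exact absurd rfl h
  | one => simpa using isOpen_S_one
  | two => simpa using isOpen_S_two

lemma isClosed_S_star : IsClosed ({s : S | s = S.star} : Set S) := by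
  have h : ({s : S | s = S.star} : Set S) = (({S.one} : Set S) ∪ {S.two})ᶜ := by
    ext s; cases s <;> simp
  rw [h]
  exact IsOpen.isClosed_compl (isOpen_S_one.union isOpen_S_two)

end Aux

section Aux2

open Set

variable {τ : ℕ → S} {N : ℕ}

lemma tau_add_N (hper : HasPeriod τ N) (i : ℕ) : τ (N + i) = τ i :=
  congrFun hper.1 i

lemma tau_mod (hper : HasPeriod τ N) (hN : 0 < N) : ∀ i, τ i = τ (i % N) := by
  intro i
  induction i using Nat.strong_induction_on with
  | _ i ih =>
    by_cases h : i < N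
    · rw [Nat.mod_eq_of_lt h]
    · push_neg at h
      have h1 : i = N + (i - N) := by omega
      have h2 : τ i = τ (i - N) := by
        conv_lhs => rw [h1]
        exact tau_add_N hper _
      rw [h2, ih (i - N) (by omega), Nat.mod_eq_sub_mod h]

/-- The bi-infinite periodic pattern centered (starred) at `c`. -/
noncomputable def Pat (τ : ℕ → S) (N : ℕ) (c : ℤ) : ℤ → S :=
  fun n => τ ((n - c) % (N : ℤ)).toNat

lemma int_emod_lt (a : ℤ) (hN : 0 < N) : 0 ≤ a % (N : ℤ) ∧ a % (N : ℤ) < N :=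
  ⟨Int.emod_nonneg a (by exact_mod_cast hN.ne'), Int.emod_lt_of_pos a (by exact_mod_cast hN)⟩

lemma pat_congr (hN : 0 < N) {c c' : ℤ} (h : (N : ℤ) ∣ (c - c')) (n : ℤ) :
    Pat τ N c n = Pat τ N c' n := by
  obtain ⟨q, hq⟩ := h
  have h1 : n - c' = (n - c) + (N : ℤ) * q := by linarith
  unfold Pat
  rw [h1, Int.add_mul_emod_self_left]

lemma pat_star_of_dvd (hτ0 : τ 0 = S.star) {c n : ℤ} (h : (N : ℤ) ∣ (n - c)) :
    Pat τ N c n = S.star := by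
  unfold Pat
  rw [Int.emod_eq_zero_of_dvd h]
  simpa using hτ0

lemma pat_nonstar (hτi : ∀ i, 1 ≤ i → i < N → τ i ≠ S.star) (hN : 0 < N)
    {c n : ℤ} (h : ¬ (N : ℤ) ∣ (n - c)) : Pat τ N c n ≠ S.star := by
  unfold Pat
  obtain ⟨h0, h1⟩ := int_emod_lt (n - c) (hN := hN)
  have hne : (n - c) % (N : ℤ) ≠ 0 := fun hh => h (Int.dvd_of_emod_eq_zero hh)
  refine hτi _ ?_ ?_
  · omega
  · omega

lemma pat_tau (hper : HasPeriod τ N) (hN : 0 < N) {c n : ℤ} (h : (N : ℤ) ∣ (n - c)) (i : ℕ) :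
    Pat τ N c (n + (i : ℤ)) = τ i := by
  obtain ⟨q, hq⟩ := h
  unfold Pat
  have h1 : n + (i : ℤ) - c = (i : ℤ) + (N : ℤ) * q := by linarith
  rw [h1, Int.add_mul_emod_self_left]
  have h2 : ((i : ℤ) % (N : ℤ)) = ((i % N : ℕ) : ℤ) := (Int.natCast_mod i N).symm
  rw [h2, Int.toNat_natCast]
  exact (tau_mod hper hN i).symm

/-- Star tail lemma. -/
lemma star_tail {z : ℤ → S} (hz : z ∈ Dhat τ) {n : ℤ} (h : z n = S.star) :
    ∀ i : ℕ, z (n + (i : ℤ)) = τ i := by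
  intro i
  have h0 : proj n z 0 = S.star := by simpa [proj] using h
  have h1 := (hz n).1 0 h0
  have h2 := congrFun h1 i
  simpa [shiftN, proj] using h2

/-- All-approx window lemma. -/
lemma approx_window {z : ℤ → S} (hz : z ∈ Dhat τ) {n : ℤ}
    (h : ∀ i : ℕ, S.approx (z (n + (i : ℤ))) (τ i)) : ∀ i : ℕ, z (n + (i : ℤ)) = τ i := by
  intro i
  have h1 := (hz n).2 0 (by intro j; simpa [proj] using h j)
  have h2 := congrFun h1 i
  simpa [shiftN, proj] using h2

lemma star_prop (hper : HasPeriod τ N) (hτ0 : τ 0 = S.star) {z : ℤ → S} (hz : z ∈ Dhat τ)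
    {n : ℤ} (h : z n = S.star) : z (n + (N : ℤ)) = S.star := by
  have h1 := star_tail hz h N
  rw [h1]
  have h2 : τ N = τ 0 := by simpa using tau_add_N hper 0
  rw [h2, hτ0]

end Aux2

section Aux3

open Set

variable {τ : ℕ → S} {N : ℕ}

lemma star_prop_iter (hper : HasPeriod τ N) (hτ0 : τ 0 = S.star) {z : ℤ → S}
    (hz : z ∈ Dhat τ) {n : ℤ} (h : z n = S.star) :
    ∀ j : ℕ, z (n + (j : ℤ) * (N : ℤ)) = S.star := by
  intro j
  induction j with
  | zero => simpa using h
  | succ j ih =>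
    have h1 : n + ((j + 1 : ℕ) : ℤ) * (N : ℤ) = (n + (j : ℤ) * (N : ℤ)) + (N : ℤ) := by
      push_cast; ring
    rw [h1]
    exact star_prop hper hτ0 hz ih

/-- A point with stars at an arbitrarily deep arithmetic progression is the periodic pattern. -/
lemma pattern_of_deep_stars (hper : HasPeriod τ N) (hN : 0 < N) {z : ℤ → S}
    (hz : z ∈ Dhat τ) (c : ℤ) (h : ∀ j : ℕ, z (c - (j : ℤ) * (N : ℤ)) = S.star) :
    ∀ n, z n = Pat τ N c n := by
  intro n
  set j : ℕ := (c - n).toNat with hj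
  have hj1 : c - n ≤ (j : ℤ) := Int.self_le_toNat _
  have hj2 : (0 : ℤ) ≤ (j : ℤ) := Int.natCast_nonneg _
  have hjN : (j : ℤ) ≤ (j : ℤ) * (N : ℤ) := by
    nlinarith [show (1 : ℤ) ≤ (N : ℤ) by exact_mod_cast hN]
  have hle : c - (j : ℤ) * (N : ℤ) ≤ n := by linarith
  set i : ℕ := (n - (c - (j : ℤ) * (N : ℤ))).toNat with hi
  have hi1 : (i : ℤ) = n - c + (j : ℤ) * (N : ℤ) := by
    rw [hi, Int.toNat_of_nonneg (by linarith)]; ring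
  have h1 : z n = τ i := by
    have h2 : n = (c - (j : ℤ) * (N : ℤ)) + (i : ℤ) := by rw [hi1]; ring
    rw [h2]
    exact star_tail hz (h j) i
  rw [h1]
  unfold Pat
  have h3 : ((i : ℤ) % (N : ℤ)) = (n - c) % (N : ℤ) := by
    rw [hi1, Int.add_mul_emod_self_right]
  have h4 : ((i % N : ℕ) : ℤ) = (n - c) % (N : ℤ) := by
    rw [← h3]; exact Int.natCast_mod i N
  have h5 : (i % N : ℕ) = ((n - c) % (N : ℤ)).toNat := by
    omega
  rw [← h5]
  exact tau_mod hper hN i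

end Aux3

section Aux4

open Set

variable {τ : ℕ → S} {N k : ℕ}

lemma seg_length (ν : ℕ → S) (a b : ℕ) : (seg ν a b).length = b + 1 - a := by
  simp [seg]

lemma seg_getD (ν : ℕ → S) {a b i : ℕ} (h : i < b + 1 - a) :
    (seg ν a b).getD i S.star = ν (a + i) := by
  rw [List.getD_eq_getElem _ _ (by simpa [seg_length] using h)]
  simp [seg]

lemma mem_seg {ν : ℕ → S} {a b : ℕ} {s : S} (h : s ∈ seg ν a b) :
    ∃ i, i < b + 1 - a ∧ s = ν (a + i) := by
  simp only [seg, List.mem_map, List.mem_range] at h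
  obtain ⟨i, hi, rfl⟩ := h
  exact ⟨i, hi, rfl⟩

lemma getD_ne_star {l : List S} (h : ∀ s ∈ l, s ≠ S.star) {i : ℕ} (hi : i < l.length) :
    l.getD i S.star ≠ S.star := by
  rw [List.getD_eq_getElem _ _ hi]
  exact h _ (List.getElem_mem hi)

lemma wrep_ge (W V : List S) {m : ℕ} (h : V.length ≤ m) :
    wrep W V m = W.getD (W.length - 1 - ((m - V.length) % W.length)) S.star := by
  unfold wrep
  rw [if_neg (by omega)]

lemma wrep_lt (W V : List S) {m : ℕ} (h : m < V.length) :
    wrep W V m = V.getD (V.length - 1 - m) S.star := by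
  unfold wrep
  rw [if_pos h]

lemma nu_nonstar (hτi : ∀ i, 1 ≤ i → i < N → τ i ≠ S.star) (hk1 : N < 2 * k) (hk2 : k < N) :
    ∀ i, 1 ≤ i → i ≤ N → nuCase2 τ N k i ≠ S.star := by
  intro i h1 h2
  unfold nuCase2
  split
  · exact hτi (N - k) (by omega) (by omega)
  · exact hτi i h1 (by omega)

lemma nu_k (hk2 : k < N) : nuCase2 τ N k k = τ k := by
  unfold nuCase2
  rw [if_neg (by omega)]

/-- `e` has eventual period `k`. -/
lemma e_period (hk1 : N < 2 * k) (hk2 : k < N) {m : ℕ} (h : N ≤ m) :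
    eCase2 τ N k (m + k) = eCase2 τ N k m := by
  have hk : 1 ≤ k := by omega
  have hWlen : (seg (nuCase2 τ N k) 1 (k - 1) ++ [flipS (nuCase2 τ N k k)]).length = k := by
    simp [seg_length]; omega
  have hVlen : (seg (nuCase2 τ N k) 1 N).length = N := by simp [seg_length]
  unfold eCase2
  rw [wrep_ge _ _ (by omega), wrep_ge _ _ (by omega)]
  rw [hVlen, hWlen]
  congr 2
  have h1 : m + k - N = (m - N) + k := by omega
  rw [h1, Nat.add_mod_right]

lemma e_val (hτi : ∀ i, 1 ≤ i → i < N → τ i ≠ S.star) (hk1 : N < 2 * k) (hk2 : k < N)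
    (j : ℕ) : eCase2 τ N k (N + j * k) = flipS (τ k) := by
  have hk : 1 ≤ k := by omega
  have hL1 : (seg (nuCase2 τ N k) 1 (k - 1)).length = k - 1 := by simp [seg_length]
  have hWlen : (seg (nuCase2 τ N k) 1 (k - 1) ++ [flipS (nuCase2 τ N k k)]).length = k := by
    simp [seg_length]; omega
  have hVlen : (seg (nuCase2 τ N k) 1 N).length = N := by simp [seg_length]
  unfold eCase2
  rw [wrep_ge _ _ (by omega)]
  rw [hVlen, hWlen]
  have h1 : N + j * k - N = j * k := by omega
  rw [h1, Nat.mul_mod_left]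
  have h2 : k - 1 - 0 = k - 1 := by omega
  rw [h2]
  rw [List.getD_append_right _ _ _ _ (by omega)]
  rw [hL1]
  have h3 : k - 1 - (k - 1) = 0 := by omega
  rw [h3]
  simp [nu_k hk2]

lemma et_val (hτi : ∀ i, 1 ≤ i → i < N → τ i ≠ S.star) (hk1 : N < 2 * k) (hk2 : k < N)
    (j : ℕ) : etCase2 τ N k (N + j * k) = τ k := by
  have hk : 1 ≤ k := by omega
  set ν := nuCase2 τ N k with hν
  have hL1 : (seg ν 1 (N - k - 1)).length = N - k - 1 := by simp [seg_length]
  have hL12 : (seg ν 1 (N - k - 1) ++ [flipS (ν (N - k))]).length = N - k := by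
    simp [seg_length]; omega
  have hL3 : (seg ν (N - k + 1) k).length = 2 * k - N := by simp [seg_length]; omega
  have hWlen : (seg ν 1 (N - k - 1) ++ [flipS (ν (N - k))] ++ seg ν (N - k + 1) k).length
      = k := by
    rw [List.length_append, hL12, hL3]; omega
  have hVlen : (seg ν 1 (N - k - 1) ++ [flipS (ν (N - k))] ++ seg ν (N - k + 1) (N - 1)
      ++ [flipS (ν N)]).length = N := by
    simp [seg_length]; omega
  unfold etCase2
  rw [← hν, wrep_ge _ _ (by omega)]
  rw [hVlen, hWlen]
  have h1 : N + j * k - N = j * k := by omega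
  rw [h1, Nat.mul_mod_left]
  have h2 : k - 1 - 0 = k - 1 := by omega
  rw [h2]
  rw [List.getD_append_right _ _ _ _ (by omega)]
  rw [hL12]
  rw [seg_getD _ (by omega)]
  have h4 : N - k + 1 + (k - 1 - (N - k)) = k := by omega
  rw [h4, hν, nu_k hk2]

lemma e_nonstar (hτi : ∀ i, 1 ≤ i → i < N → τ i ≠ S.star) (hk1 : N < 2 * k) (hk2 : k < N)
    (m : ℕ) : eCase2 τ N k m ≠ S.star := by
  have hk : 1 ≤ k := by omega
  set ν := nuCase2 τ N k with hν
  have hνs : ∀ i, 1 ≤ i → i ≤ N → ν i ≠ S.star := nu_nonstar hτi hk1 hk2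
  have hL1 : (seg ν 1 (k - 1)).length = k - 1 := by simp [seg_length]
  have hWlen : (seg ν 1 (k - 1) ++ [flipS (ν k)]).length = k := by
    simp [seg_length]; omega
  have hVlen : (seg ν 1 N).length = N := by simp [seg_length]
  have hWmem : ∀ s ∈ seg ν 1 (k - 1) ++ [flipS (ν k)], s ≠ S.star := by
    intro s hs
    rcases List.mem_append.mp hs with hs | hs
    · obtain ⟨i, hi, rfl⟩ := mem_seg hs
      exact hνs _ (by omega) (by omega)
    · rcases List.mem_singleton.mp hs with rfl
      exact flipS_ne_star (hνs k (by omega) (by omega))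
  have hVmem : ∀ s ∈ seg ν 1 N, s ≠ S.star := by
    intro s hs
    obtain ⟨i, hi, rfl⟩ := mem_seg hs
    exact hνs _ (by omega) (by omega)
  unfold eCase2
  rw [← hν]
  by_cases h : m < (seg ν 1 N).length
  · rw [wrep_lt _ _ h]
    exact getD_ne_star hVmem (by omega)
  · rw [wrep_ge _ _ (by omega)]
    refine getD_ne_star hWmem ?_
    have : (m - (seg ν 1 N).length) % (seg ν 1 (k - 1) ++ [flipS (ν k)]).length
        < (seg ν 1 (k - 1) ++ [flipS (ν k)]).length := Nat.mod_lt _ (by omega)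
    omega

end Aux4

section Aux5

open Set

variable {τ : ℕ → S} {N k : ℕ}

/-- The key combinatorial lemma: `e` differs from every periodic pattern at infinitely many
positions where the pattern is non-star. -/
lemma e_pattern_diff_infinite (hacc : Acceptable τ) (hper : HasPeriod τ N)
    (hτ0 : τ 0 = S.star) (hτi : ∀ i, 1 ≤ i → i < N → τ i ≠ S.star)
    (hk1 : N < 2 * k) (hk2 : k < N) (c : ℤ) :
    {m : ℕ | ¬ (N : ℤ) ∣ (-((m : ℤ) + 1) - c) ∧
      eCase2 τ N k m ≠ Pat τ N c (-((m : ℤ) + 1))}.Infinite := by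
  have hk : 1 ≤ k := by omega
  have hN : 0 < N := by omega
  by_contra hfin
  rw [Set.not_infinite] at hfin
  obtain ⟨M, hM⟩ := hfin.bddAbove
  have key : ∀ i : ℕ, S.approx (τ (k + i)) (τ i) := by
    intro i
    by_cases hi0 : i % N = 0
    · refine Or.inr (Or.inr ?_)
      rw [tau_mod hper hN i, hi0, hτ0]
    by_cases hki0 : (k + i) % N = 0
    · refine Or.inr (Or.inl ?_)
      rw [tau_mod hper hN (k + i), hki0, hτ0]
    refine Or.inl ?_
    -- construct a deep position m with the right residue
    set r : ℕ := ((-(k : ℤ) - (i : ℤ) - c - 1) % (N : ℤ)).toNat with hr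
    set m : ℕ := r + (M + N + 1) * N with hm
    have hbig : M + N + 1 ≤ (M + N + 1) * N := Nat.le_mul_of_pos_right _ hN
    have hmM : M < m := by omega
    have hmN : N ≤ m := by omega
    obtain ⟨he0, he1⟩ := int_emod_lt (-(k : ℤ) - (i : ℤ) - c - 1) (hN := hN)
    have hrc : (r : ℤ) = (-(k : ℤ) - (i : ℤ) - c - 1) % (N : ℤ) := Int.toNat_of_nonneg he0
    have hrm : ((m : ℤ)) % (N : ℤ) = (-(k : ℤ) - (i : ℤ) - c - 1) % (N : ℤ) := by
      have h1 : (m : ℤ) = (r : ℤ) + ((M + N + 1 : ℕ) : ℤ) * (N : ℤ) := by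
        rw [hm]; push_cast; ring
      rw [h1, Int.add_mul_emod_self_right, hrc, Int.emod_emod_of_dvd _ dvd_rfl]
    have hmq : (N : ℤ) ∣ (-(k : ℤ) - (i : ℤ) - c - 1) - (m : ℤ) := Int.ModEq.dvd hrm
    have hdvd1 : (N : ℤ) ∣ ((-((m : ℤ) + 1) - c) - ((k : ℤ) + (i : ℤ))) := by
      have h2 : (-(k : ℤ) - (i : ℤ) - c - 1) - (m : ℤ)
          = (-((m : ℤ) + 1) - c) - ((k : ℤ) + (i : ℤ)) := by ring
      rwa [h2] at hmq
    have hdvd2 : (N : ℤ) ∣ ((-(((m + k : ℕ) : ℤ) + 1) - c) - (i : ℤ)) := by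
      have h2 : ((-((m : ℤ) + 1) - c) - ((k : ℤ) + (i : ℤ)))
          = ((-(((m + k : ℕ) : ℤ) + 1) - c) - (i : ℤ)) := by push_cast; ring
      rwa [h2] at hdvd1
    have hnd1 : ¬ (N : ℤ) ∣ (-((m : ℤ) + 1) - c) := by
      intro hd
      have h3 := dvd_sub hd hdvd1
      rw [show (-((m : ℤ) + 1) - c) - ((-((m : ℤ) + 1) - c) - ((k : ℤ) + (i : ℤ)))
          = ((k + i : ℕ) : ℤ) by push_cast; ring] at h3
      have h5 : N ∣ (k + i) := Int.natCast_dvd_natCast.mp h3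
      omega
    have hnd2 : ¬ (N : ℤ) ∣ (-(((m + k : ℕ) : ℤ) + 1) - c) := by
      intro hd
      have h3 := dvd_sub hd hdvd2
      rw [show (-(((m + k : ℕ) : ℤ) + 1) - c) - ((-(((m + k : ℕ) : ℤ) + 1) - c) - (i : ℤ))
          = (i : ℤ) by ring] at h3
      have h5 : N ∣ i := Int.natCast_dvd_natCast.mp h3
      omega
    -- m and m+k are beyond the bound M, so they are not in the difference set
    have hem : eCase2 τ N k m = Pat τ N c (-((m : ℤ) + 1)) := by
      by_contra hne
      exact absurd (hM ⟨hnd1, hne⟩) (by omega)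
    have hemk : eCase2 τ N k (m + k) = Pat τ N c (-(((m + k : ℕ) : ℤ) + 1)) := by
      by_contra hne
      exact absurd (hM ⟨hnd2, hne⟩) (by omega)
    -- compute the two pattern values
    have hp1 : Pat τ N c (-((m : ℤ) + 1)) = τ (k + i) := by
      unfold Pat
      have h7 : (-((m : ℤ) + 1) - c) % (N : ℤ) = ((k : ℤ) + (i : ℤ)) % (N : ℤ) := by
        have := Int.emod_emod_of_dvd (-((m : ℤ) + 1) - c) (dvd_refl (N : ℤ))
        obtain ⟨q, hq⟩ := hdvd1
        have h8 : -((m : ℤ) + 1) - c = ((k : ℤ) + (i : ℤ)) + (N : ℤ) * q := by linarith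
        rw [h8, Int.add_mul_emod_self_left]
      rw [h7]
      have h9 : ((k : ℤ) + (i : ℤ)) = (((k + i : ℕ)) : ℤ) := by push_cast; ring
      rw [h9, ← Int.natCast_mod, Int.toNat_natCast]
      exact (tau_mod hper hN (k + i)).symm
    have hp2 : Pat τ N c (-(((m + k : ℕ) : ℤ) + 1)) = τ i := by
      unfold Pat
      obtain ⟨q, hq⟩ := hdvd2
      have h8 : -(((m + k : ℕ) : ℤ) + 1) - c = (i : ℤ) + (N : ℤ) * q := by linarith
      rw [h8, Int.add_mul_emod_self_left, ← Int.natCast_mod, Int.toNat_natCast]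
      exact (tau_mod hper hN i).symm
    have hper' : eCase2 τ N k (m + k) = eCase2 τ N k m := e_period hk1 hk2 hmN
    rw [hem, hp1] at hper'
    rw [hemk, hp2] at hper'
    exact hper'.symm
  exact hper.2 k hk hk2 (hacc k hk key)

end Aux5

section Aux6

open Set

variable {τ : ℕ → S} {N : ℕ}

lemma pigeon_fun (N : ℕ) (hN : 0 < N) (g : ℕ → ℕ) (hg : ∀ i, g i < N) (I : Set ℕ)
    (hI : I.Infinite) : ∃ a, a < N ∧ {i | i ∈ I ∧ g i = a}.Infinite := by
  by_contra h
  push_neg at h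
  have hsub : I ⊆ ⋃ a ∈ Finset.range N, {i | i ∈ I ∧ g i = a} := by
    intro i hi
    exact Set.mem_biUnion (Finset.mem_range.mpr (hg i)) ⟨hi, rfl⟩
  have hfin : (⋃ a ∈ Finset.range N, {i | i ∈ I ∧ g i = a}).Finite :=
    Set.Finite.biUnion (Finset.range N).finite_toSet
      (fun a ha => h a (Finset.mem_range.mp ha))
  exact hI (hfin.subset hsub)

lemma exists_star_time {γ : ℝ → ℤ → S} (hγ : Continuous γ) {n : ℤ} {a b : ℝ} (hab : a ≤ b)
    (h1 : γ a n ≠ S.star) (h2 : γ b n ≠ S.star) (hne : γ a n ≠ γ b n) :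
    ∃ t ∈ Set.Icc a b, γ t n = S.star := by
  by_contra h
  push_neg at h
  have hcont : Continuous (fun t : ℝ => γ t n) := (continuous_apply n).comp hγ
  have hu : IsOpen {t : ℝ | γ t n = γ a n} := (isOpen_S_val h1).preimage hcont
  have hv : IsOpen {t : ℝ | γ t n = γ b n} := (isOpen_S_val h2).preimage hcont
  have hcover : Set.Icc a b ⊆ {t | γ t n = γ a n} ∪ {t | γ t n = γ b n} := by
    intro t ht
    have h3 := h t ht
    simp only [Set.mem_union, Set.mem_setOf_eq]
    cases hC : γ t n <;> cases hA : γ a n <;> cases hB : γ b n <;> simp_all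
  have hna : (Set.Icc a b ∩ {t | γ t n = γ a n}).Nonempty :=
    ⟨a, ⟨le_refl a, hab⟩, rfl⟩
  have hnb : (Set.Icc a b ∩ {t | γ t n = γ b n}).Nonempty :=
    ⟨b, ⟨hab, le_refl b⟩, rfl⟩
  obtain ⟨t, _, ht1, ht2⟩ := isPreconnected_Icc _ _ hu hv hcover hna hnb
  exact hne (ht1 ▸ ht2 ▸ rfl)

lemma key_step (hper : HasPeriod τ N) (hτ0 : τ 0 = S.star) (hN : 0 < N)
    {γ : ℝ → ℤ → S} (hγ : Continuous γ) (hmem : ∀ s, γ s ∈ Dhat τ)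
    {b : ℝ} (hb : 0 ≤ b) (G : Set ℕ) (hGinf : G.Infinite)
    (hG : ∀ m ∈ G, γ 0 (-((m : ℤ) + 1)) ≠ S.star ∧ γ b (-((m : ℤ) + 1)) ≠ S.star ∧
          γ 0 (-((m : ℤ) + 1)) ≠ γ b (-((m : ℤ) + 1))) :
    ∃ t ∈ Set.Icc (0 : ℝ) b, ∃ c : ℤ, (∀ n, γ t n = Pat τ N c n) ∧
      ∃ m ∈ G, (N : ℤ) ∣ (-((m : ℤ) + 1) - c) := by
  obtain ⟨ω, hω, hinf⟩ := pigeon_fun N hN (fun m => m % N) (fun m => Nat.mod_lt _ hN) G hGinf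
  set c : ℤ := -((ω : ℤ) + 1) with hc
  set T : ℕ → Set ℝ := fun j => Set.Icc 0 b ∩ {s | γ s (c - (j : ℤ) * (N : ℤ)) = S.star}
    with hT
  have hclosed : ∀ j, IsClosed (T j) := by
    intro j
    exact isClosed_Icc.inter (isClosed_S_star.preimage ((continuous_apply _).comp hγ))
  have hcpt : IsCompact (T 0) :=
    isCompact_Icc.inter_right (isClosed_S_star.preimage ((continuous_apply _).comp hγ))
  have hne : ∀ j, (T j).Nonempty := by
    intro j
    obtain ⟨m, hm, hmgt⟩ := hinf.exists_gt (ω + j * N)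
    obtain ⟨hmG, hmω⟩ := hm
    have hdm : N * (m / N) + ω = m := by
      conv_rhs => rw [← Nat.div_add_mod m N]
      rw [hmω]
    set j' : ℕ := m / N with hj'
    have hjj' : j ≤ j' := by
      have h1 : j * N < j' * N := by rw [Nat.mul_comm j' N]; omega
      exact le_of_lt (Nat.lt_of_mul_lt_mul_right h1)
    obtain ⟨hG1, hG2, hG3⟩ := hG m hmG
    obtain ⟨t, htmem, htstar⟩ := exists_star_time hγ hb hG1 hG2 hG3
    refine ⟨t, htmem, ?_⟩
    have hcoord : -((m : ℤ) + 1) = c - (j' : ℤ) * (N : ℤ) := by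
      rw [hc]
      have hm' : (m : ℤ) = (N : ℤ) * (j' : ℤ) + (ω : ℤ) := by
        exact_mod_cast (congrArg (fun x : ℕ => (x : ℤ)) hdm).symm
      rw [hm']; ring
    rw [hcoord] at htstar
    have h2 := star_prop_iter hper hτ0 (hmem t) htstar (j' - j)
    have h3 : c - (j' : ℤ) * (N : ℤ) + ((j' - j : ℕ) : ℤ) * (N : ℤ)
        = c - (j : ℤ) * (N : ℤ) := by
      push_cast [Nat.cast_sub hjj']
      ring
    rw [h3] at h2
    exact h2
  have hanti : ∀ j, T (j + 1) ⊆ T j := by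
    intro j t ht
    obtain ⟨ht1, ht2⟩ := ht
    refine ⟨ht1, ?_⟩
    have h2 := star_prop hper hτ0 (hmem t) ht2
    have h3 : c - ((j + 1 : ℕ) : ℤ) * (N : ℤ) + (N : ℤ) = c - (j : ℤ) * (N : ℤ) := by
      push_cast; ring
    rw [h3] at h2
    exact h2
  obtain ⟨t, ht⟩ := IsCompact.nonempty_iInter_of_sequence_nonempty_isCompact_isClosed
    T hanti hne hcpt hclosed
  rw [Set.mem_iInter] at ht
  have htmem : t ∈ Set.Icc (0 : ℝ) b := (ht 0).1
  have hstars : ∀ j : ℕ, γ t (c - (j : ℤ) * (N : ℤ)) = S.star := fun j => (ht j).2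
  refine ⟨t, htmem, c, pattern_of_deep_stars hper hN (hmem t) c hstars, ?_⟩
  obtain ⟨m, hmG, hmω⟩ := hinf.nonempty
  have hdm : N * (m / N) + ω = m := by
    conv_rhs => rw [← Nat.div_add_mod m N]
    rw [hmω]
  refine ⟨m, hmG, ⟨-((m / N : ℕ) : ℤ), ?_⟩⟩
  have hm' : ((N : ℤ)) * ((m / N : ℕ) : ℤ) + (ω : ℤ) = (m : ℤ) := by
    exact_mod_cast congrArg (fun x : ℕ => (x : ℤ)) hdm
  rw [hc]
  linear_combination hm'

end Aux6

/-- The backwards itineraries `e` and `ẽ` of Theorem `case2` lie on distinct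
arc-components of `D̂_τ`. -/
theorem case2_distinct_arc_components
    (τ : ℕ → S) (hacc : Acceptable τ) (N : ℕ) (hper : HasPeriod τ N)
    (hτ0 : τ 0 = S.star) (hτi : ∀ i, 1 ≤ i → i < N → τ i ≠ S.star)
    (k : ℕ) (hk1 : N < 2 * k) (hk2 : k < N)
    (hmatch : ∀ i, 1 ≤ i → i ≤ N - k - 1 → τ (k + i) = τ i) :
    ∀ x ∈ Dhat τ, ∀ y ∈ Dhat τ,
      bitin x = eCase2 τ N k → bitin y = etCase2 τ N k →
      ∀ A : Set (ℤ → S), A ⊆ Dhat τ → IsArcSet A → ¬(x ∈ A ∧ y ∈ A) := by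
  intro x hx y hy hex hey A hA hArc hxy
  obtain ⟨hxA, hyA⟩ := hxy
  have hk : 1 ≤ k := by omega
  have hN : 0 < N := by omega
  -- coordinates of x and y
  have hxco : ∀ m : ℕ, x (-((m : ℤ) + 1)) = eCase2 τ N k m := fun m => congrFun hex m
  have hyco : ∀ m : ℕ, y (-((m : ℤ) + 1)) = etCase2 τ N k m := fun m => congrFun hey m
  -- build a continuous path γ : ℝ → D̂_τ from x to y
  obtain ⟨a0, b0, g, hgemb, hgrange, -, -⟩ := hArc
  rw [← hgrange] at hxA hyA
  obtain ⟨u, hu⟩ := hxA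
  obtain ⟨v, hv⟩ := hyA
  set q : ℝ → ℝ := fun s => (u : ℝ) + (min 1 (max 0 s)) * ((v : ℝ) - (u : ℝ)) with hqdef
  have hq : ∀ s, q s ∈ unitInterval := by
    intro s
    have h0 : (0 : ℝ) ≤ min 1 (max 0 s) := le_min zero_le_one (le_max_left 0 s)
    have h1 : min (1 : ℝ) (max 0 s) ≤ 1 := min_le_left _ _
    constructor
    · show (0 : ℝ) ≤ (u : ℝ) + (min 1 (max 0 s)) * ((v : ℝ) - (u : ℝ))
      nlinarith [mul_nonneg (sub_nonneg.mpr h1) u.2.1, mul_nonneg h0 v.2.1, u.2.1, v.2.1]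
    · show (u : ℝ) + (min 1 (max 0 s)) * ((v : ℝ) - (u : ℝ)) ≤ 1
      nlinarith [mul_le_of_le_one_right (sub_nonneg.mpr h1) u.2.2,
        mul_le_of_le_one_right h0 v.2.2, u.2.2, v.2.2]
  set γ : ℝ → ℤ → S := fun s => g ⟨q s, hq s⟩ with hγdef
  have hqcont : Continuous q := by fun_prop
  have hγcont : Continuous γ := hgemb.continuous.comp (hqcont.subtype_mk hq)
  have hγmem : ∀ s, γ s ∈ Dhat τ := by
    intro s
    apply hA
    rw [← hgrange]
    exact Set.mem_range_self _
  have hγ0 : γ 0 = x := by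
    have hq0 : q 0 = (u : ℝ) := by
      show (u : ℝ) + (min 1 (max 0 (0:ℝ))) * ((v : ℝ) - (u : ℝ)) = (u : ℝ)
      rw [max_self, min_eq_right zero_le_one]
      ring
    have h1 : (⟨q 0, hq 0⟩ : unitInterval) = u := Subtype.ext hq0
    show g ⟨q 0, hq 0⟩ = x
    rw [h1, hu]
  have hγ1 : γ 1 = y := by
    have hq1 : q 1 = (v : ℝ) := by
      show (u : ℝ) + (min 1 (max 0 (1:ℝ))) * ((v : ℝ) - (u : ℝ)) = (v : ℝ)
      rw [max_eq_right zero_le_one, min_self]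
      ring
    have h1 : (⟨q 1, hq 1⟩ : unitInterval) = v := Subtype.ext hq1
    show g ⟨q 1, hq 1⟩ = y
    rw [h1, hv]
  -- the base difference set between e and ẽ
  set G0 : Set ℕ := Set.range (fun j : ℕ => N + j * k) with hG0def
  have hG0inf : G0.Infinite := by
    apply Set.infinite_range_of_injective
    intro i j hij
    simp only at hij
    have h1 : i * k = j * k := by omega
    exact Nat.eq_of_mul_eq_mul_right (by omega) h1
  have hτk : τ k ≠ S.star := hτi k hk hk2
  have hG0cond : ∀ m ∈ G0, γ 0 (-((m : ℤ) + 1)) ≠ S.star ∧ γ 1 (-((m : ℤ) + 1)) ≠ S.star ∧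
      γ 0 (-((m : ℤ) + 1)) ≠ γ 1 (-((m : ℤ) + 1)) := by
    rintro m ⟨j, rfl⟩
    rw [hγ0, hγ1, hxco _, hyco _, e_val hτi hk1 hk2 j, et_val hτi hk1 hk2 j]
    exact ⟨flipS_ne_star hτk, hτk, flipS_ne hτk⟩
  -- the inductive step
  have hstep : ∀ t c, (t ∈ Set.Icc (0:ℝ) 1 ∧ ∀ n, γ t n = Pat τ N c n) →
      ∃ t' c', t' < t ∧ (t' ∈ Set.Icc (0:ℝ) 1 ∧ ∀ n, γ t' n = Pat τ N c' n) ∧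
        ¬ (N : ℤ) ∣ (c' - c) := by
    intro t c ⟨⟨ht0, ht1⟩, hpat⟩
    have hG'inf := e_pattern_diff_infinite hacc hper hτ0 hτi hk1 hk2 c
    have hG'cond : ∀ m ∈ {m : ℕ | ¬ (N : ℤ) ∣ (-((m : ℤ) + 1) - c) ∧
        eCase2 τ N k m ≠ Pat τ N c (-((m : ℤ) + 1))},
        γ 0 (-((m : ℤ) + 1)) ≠ S.star ∧ γ t (-((m : ℤ) + 1)) ≠ S.star ∧
        γ 0 (-((m : ℤ) + 1)) ≠ γ t (-((m : ℤ) + 1)) := by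
      intro m hm
      refine ⟨?_, ?_, ?_⟩
      · rw [hγ0, hxco m]; exact e_nonstar hτi hk1 hk2 m
      · rw [hpat _]; exact pat_nonstar hτi hN hm.1
      · rw [hγ0, hxco m, hpat _]; exact hm.2
    obtain ⟨t', ht'mem, c', hpat', m, hmG', hdvd⟩ :=
      key_step hper hτ0 hN hγcont hγmem ht0 _ hG'inf hG'cond
    have hndvd : ¬ (N : ℤ) ∣ (c' - c) := by
      intro hd
      apply hmG'.1
      have h2 : -((m : ℤ) + 1) - c = (-((m : ℤ) + 1) - c') + (c' - c) := by ring
      rw [h2]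
      exact dvd_add hdvd hd
    refine ⟨t', c', ?_, ⟨⟨ht'mem.1, le_trans ht'mem.2 ht1⟩, hpat'⟩, hndvd⟩
    refine lt_of_le_of_ne ht'mem.2 ?_
    intro heq
    have h1 : γ t c' = S.star := by
      rw [← heq, hpat' c']
      exact pat_star_of_dvd hτ0 (by simp)
    have h2 : γ t c' ≠ S.star := by
      rw [hpat c']
      exact pat_nonstar hτi hN (by simpa using hndvd)
    exact h2 h1
  -- the base point
  obtain ⟨t1, ht1mem, c1, hpat1, -⟩ :=
    key_step hper hτ0 hN hγcont hγmem zero_le_one G0 hG0inf hG0cond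
  -- construct a strictly decreasing sequence of pattern times
  have hQ : ∀ p : {p : ℝ × ℤ // p.1 ∈ Set.Icc (0:ℝ) 1 ∧ ∀ n, γ p.1 n = Pat τ N p.2 n},
      ∃ p' : {p : ℝ × ℤ // p.1 ∈ Set.Icc (0:ℝ) 1 ∧ ∀ n, γ p.1 n = Pat τ N p.2 n},
        p'.1.1 < p.1.1 ∧ ¬ (N : ℤ) ∣ (p'.1.2 - p.1.2) := by
    rintro ⟨⟨t, c⟩, hgood⟩
    obtain ⟨t', c', hlt, hgood', hnd⟩ := hstep t c hgood
    exact ⟨⟨(t', c'), hgood'⟩, hlt, hnd⟩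
  choose F hF1 hF2 using hQ
  set p0 : {p : ℝ × ℤ // p.1 ∈ Set.Icc (0:ℝ) 1 ∧ ∀ n, γ p.1 n = Pat τ N p.2 n} :=
    ⟨(t1, c1), ht1mem, hpat1⟩ with hp0
  set seq := fun i => F^[i] p0 with hseqdef
  have hseq : ∀ i, seq (i + 1) = F (seq i) := fun i => Function.iterate_succ_apply' F i p0
  set t : ℕ → ℝ := fun i => (seq i).1.1 with htdef
  set c : ℕ → ℤ := fun i => (seq i).1.2 with hcdef
  have htlt : ∀ i, t (i + 1) < t i := by
    intro i
    show (seq (i + 1)).1.1 < (seq i).1.1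
    rw [hseq i]
    exact hF1 (seq i)
  have hnd : ∀ i, ¬ (N : ℤ) ∣ (c (i + 1) - c i) := by
    intro i
    show ¬ (N : ℤ) ∣ ((seq (i + 1)).1.2 - (seq i).1.2)
    rw [hseq i]
    exact hF2 (seq i)
  have hgood : ∀ i, t i ∈ Set.Icc (0:ℝ) 1 ∧ ∀ n, γ (t i) n = Pat τ N (c i) n :=
    fun i => (seq i).2
  -- convergence
  have hanti : StrictAnti t := strictAnti_nat_of_succ_lt htlt
  have hbdd : BddBelow (Set.range t) := by
    refine ⟨0, ?_⟩
    rintro r ⟨i, rfl⟩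
    exact (hgood i).1.1
  have htend : Filter.Tendsto t Filter.atTop (nhds (⨅ i, t i)) :=
    tendsto_atTop_ciInf hanti.antitone hbdd
  set L : ℝ := ⨅ i, t i with hLdef
  set w : ℤ → S := γ L with hwdef
  have hwmem : w ∈ Dhat τ := hγmem L
  have hγtend : Filter.Tendsto (fun i => γ (t i)) Filter.atTop (nhds w) :=
    (hγcont.tendsto L).comp htend
  -- residues
  set r : ℕ → ℕ := fun i => ((c i) % (N : ℤ)).toNat with hrdef
  have hcr : ∀ i, ((c i) % (N : ℤ)) = ((r i : ℕ) : ℤ) :=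
    fun i => (Int.toNat_of_nonneg (int_emod_lt (c i) (hN := hN)).1).symm
  have hrlt : ∀ i, r i < N := by
    intro i
    have h2 : ((r i : ℕ) : ℤ) < (N : ℤ) := by
      rw [← hcr i]
      exact (int_emod_lt (c i) (hN := hN)).2
    exact_mod_cast h2
  have hrne : ∀ i, r (i + 1) ≠ r i := by
    intro i heq
    apply hnd i
    have h1 : Int.ModEq (N : ℤ) (c i) (c (i + 1)) := by
      show (c i) % (N : ℤ) = (c (i + 1)) % (N : ℤ)
      rw [hcr (i + 1), hcr i, heq]
    exact h1.dvd
  have hPat : ∀ i, ∀ n, Pat τ N (c i) n = Pat τ N ((r i : ℕ) : ℤ) n :=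
    fun i n => pat_congr hN (Int.dvd_self_sub_of_emod_eq (hcr i)) n
  -- two residues appearing infinitely often
  obtain ⟨a, ha, hSa⟩ := pigeon_fun N hN r hrlt Set.univ Set.infinite_univ
  obtain ⟨b, hbN, hSab⟩ := pigeon_fun N hN (fun i => r (i + 1)) (fun i => hrlt (i + 1)) _ hSa
  have hba : b ≠ a := by
    obtain ⟨i0, hi0⟩ := hSab.nonempty
    have h1 := hrne i0
    rw [hi0.2, hi0.1.2] at h1
    exact h1
  -- the limit point approximates both patterns
  have hdich : ∀ n, w n = S.star ∨ (w n = Pat τ N ((a : ℕ) : ℤ) n ∧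
      w n = Pat τ N ((b : ℕ) : ℤ) n) := by
    intro n
    by_cases hv : w n = S.star
    · exact Or.inl hv
    refine Or.inr ?_
    have hopen : IsOpen {z : ℤ → S | z n = w n} := by
      have h5 : IsOpen ((fun z : ℤ → S => z n) ⁻¹' {s : S | s = w n}) :=
        (isOpen_S_val hv).preimage (continuous_apply n)
      exact h5
    have hpre := hγtend (hopen.mem_nhds rfl)
    obtain ⟨I0, hI0⟩ := Filter.mem_atTop_sets.mp hpre
    simp only [Set.mem_preimage, Set.mem_setOf_eq] at hI0
    constructor
    · obtain ⟨i, hiS, hig⟩ := hSab.exists_gt I0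
      have h1 := hI0 i (le_of_lt hig)
      have h2 := (hgood i).2 n
      have h3 := hPat i n
      rw [← h1, h2, h3, hiS.1.2]
    · obtain ⟨i, hiS, hig⟩ := hSab.exists_gt I0
      have h1 := hI0 (i + 1) (by omega)
      have h2 := (hgood (i + 1)).2 n
      have h3 := hPat (i + 1) n
      rw [← h1, h2, h3, hiS.2]
  have hda : ∀ n, w n = S.star ∨ w n = Pat τ N ((a : ℕ) : ℤ) n :=
    fun n => (hdich n).imp id And.left
  have hdb : ∀ n, w n = S.star ∨ w n = Pat τ N ((b : ℕ) : ℤ) n :=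
    fun n => (hdich n).imp id And.right
  -- the window lemma
  have hwin : ∀ c0 : ℤ, (∀ n, w n = S.star ∨ w n = Pat τ N c0 n) →
      ∀ n0 : ℤ, (N : ℤ) ∣ (n0 - c0) → ∀ i : ℕ, w (n0 + (i : ℤ)) = τ i := by
    intro c0 hc0 n0 hdvd
    apply approx_window hwmem
    intro i
    rcases hc0 (n0 + (i : ℤ)) with h | h
    · exact Or.inr (Or.inl h)
    · refine Or.inl ?_
      rw [h, pat_tau hper hN hdvd i]
  -- final contradiction
  have hndba : ¬ (N : ℤ) ∣ ((b : ℤ) - (a : ℤ)) := by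
    intro hdvd
    have h1 : ((a : ℕ) : ℤ) % (N : ℤ) = ((a : ℕ) : ℤ) :=
      Int.emod_eq_of_lt (by positivity) (by exact_mod_cast ha)
    have h2 : ((b : ℕ) : ℤ) % (N : ℤ) = ((b : ℕ) : ℤ) :=
      Int.emod_eq_of_lt (by positivity) (by exact_mod_cast hbN)
    have h3 : ((a : ℕ) : ℤ) % (N : ℤ) = ((b : ℕ) : ℤ) % (N : ℤ) := Int.modEq_iff_dvd.mpr hdvd
    rw [h1, h2] at h3
    have h4 : a = b := by exact_mod_cast h3
    exact hba h4.symm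
  set d : ℕ := (((b : ℤ) - (a : ℤ)) % (N : ℤ)).toNat with hddef
  have hd' : ((d : ℕ) : ℤ) = ((b : ℤ) - (a : ℤ)) % (N : ℤ) :=
    Int.toNat_of_nonneg (int_emod_lt _ (hN := hN)).1
  have hd0 : 1 ≤ d := by
    by_contra h
    have h5 : ((b : ℤ) - (a : ℤ)) % (N : ℤ) = 0 := by
      rw [← hd']
      omega
    exact hndba (Int.dvd_of_emod_eq_zero h5)
  have hdN : d < N := by
    have h2 : ((d : ℕ) : ℤ) < (N : ℤ) := by
      rw [hd']
      exact (int_emod_lt _ (hN := hN)).2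
    exact_mod_cast h2
  have h1 : w (((a : ℕ) : ℤ) + (d : ℤ)) = τ d :=
    hwin ((a : ℕ) : ℤ) hda ((a : ℕ) : ℤ) (by simp) d
  have h2 : w (((a : ℕ) : ℤ) + (d : ℤ)) = τ 0 := by
    have hdvd2 : (N : ℤ) ∣ ((((a : ℕ) : ℤ) + (d : ℤ)) - ((b : ℕ) : ℤ)) := by
      have h3 : (N : ℤ) ∣ (((b : ℤ) - (a : ℤ)) - ((b : ℤ) - (a : ℤ)) % (N : ℤ)) :=
        Int.dvd_self_sub_of_emod_eq rfl
      have h4 : (((a : ℕ) : ℤ) + (d : ℤ)) - ((b : ℕ) : ℤ)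
          = -((((b : ℤ) - (a : ℤ))) - (((b : ℤ) - (a : ℤ))) % (N : ℤ)) := by
        rw [hd']
        ring
      rw [h4]
      exact dvd_neg.mpr h3
    simpa using hwin ((b : ℕ) : ℤ) hdb (((a : ℕ) : ℤ) + (d : ℤ)) hdvd2 0
  rw [h1] at h2
  rw [hτ0] at h2
  exact hτi d hd0 hdN h2
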